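/- For the triangle with sides a = k(m²+n²)/(mn), b = k(p²+q²)/(pq), c = k(pn+qm)(pm−qn)/(pqmn), where k,m,n,p,q are rational with mnpq ≠ 0, the circumradius R = abc/√((a+b+c)(a+b−c)(b+c−a)(c+a−b)) equals k(m²+n²)(p²+q²)/(4mnpq); equivalently, (abc)² = (k(m²+n²)(p²+q²)/(4mnpq))² · (a+b+c)(a+b−c)(b+c−a)(c+a−b). -/
import Mathlib

theorem euler_triangle_circumradius (k m n p q a b c : ℚ)
    (hmnpq : m * n * p * q ≠ 0)
    (ha : a = k * (m^2 + n^2) / (m * n))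
    (hb : b = k * (p^2 + q^2) / (p * q))
    (hc : c = k * (p * n + q * m) * (p * m - q * n) / (p * q * m * n)) :
    (a * b * c)^2 =
      (k * (m^2 + n^2) * (p^2 + q^2) / (4 * m * n * p * q))^2 *
        ((a + b + c) * (a + b - c) * (b + c - a) * (c + a - b)) := by
  have hm : m ≠ 0 := fun h => hmnpq (by simp [h])
  have hn : n ≠ 0 := fun h => hmnpq (by simp [h])
  have hp : p ≠ 0 := fun h => hmnpq (by simp [h])
  have hq : q ≠ 0 := fun h => hmnpq (by simp [h])
  subst ha hb hc
  field_simp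
  ring
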